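/- Let f : ℝⁿ → ℝ be twice continuously differentiable with L_H-Lipschitz Hessian, L_H > 0. Fix x ∈ ℝⁿ, set g := ∇f(x) and H := ∇²f(x), and suppose g ≠ 0. Let σ > 0, ς₃ ∈ [0,1), κ_θ > 0, η₂ ∈ (0,1), μ := [−λ_min(H)]₊, and let s ∈ ℝⁿ satisfy ‖(H + (√(σ‖g‖) + μ)·I)s + g‖ ≤ min(ς₃·√(σ‖g‖)·‖s‖, κ_θ·‖g‖). If σ ≥ L_H(1+κ_θ)/(6(1−ς₃)(1−η₂)), then f(x) − f(x+s) ≥ η₂·(−⟨g,s⟩ − (1/2)⟨s,Hs⟩). -/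

import Mathlib

open RealInnerProductSpace

/-- The smallest eigenvalue of a symmetric operator on ℝⁿ, as the infimum of the
Rayleigh quotient over the unit sphere. -/
noncomputable def lamMin {n : ℕ} (T : EuclideanSpace ℝ (Fin n) → EuclideanSpace ℝ (Fin n)) : ℝ :=
  sInf {r : ℝ | ∃ v : EuclideanSpace ℝ (Fin n), ‖v‖ = 1 ∧ ⟪v, T v⟫ = r}

set_option maxHeartbeats 1000000

theorem taylor_cubic {n : ℕ}
    (f : EuclideanSpace ℝ (Fin n) → ℝ)
    (Hess : EuclideanSpace ℝ (Fin n) → EuclideanSpace ℝ (Fin n) →L[ℝ] EuclideanSpace ℝ (Fin n))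
    (LH : ℝ) (hLH : 0 ≤ LH)
    (hf : ContDiff ℝ 2 f)
    (hHess : ∀ y, HasFDerivAt (gradient f) (Hess y) y)
    (hLip : ∀ y z, ‖Hess y - Hess z‖ ≤ LH * ‖y - z‖)
    (x s : EuclideanSpace ℝ (Fin n)) :
    f (x + s) ≤ f x + ⟪gradient f x, s⟫ + (1/2) * ⟪s, Hess x s⟫ + LH / 6 * ‖s‖^3 := by
  set c : ℝ → EuclideanSpace ℝ (Fin n) := fun t => x + t • s with hc_def
  have hc : ∀ t : ℝ, HasDerivAt c s t := by
    intro t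
    simpa [hc_def] using ((hasDerivAt_id t).smul_const s).const_add x
  have hdiff : ∀ y, DifferentiableAt ℝ f y :=
    fun y => (hf.differentiable (by norm_num)).differentiableAt
  have hφ : ∀ t : ℝ, HasDerivAt (fun t => f (c t)) ⟪gradient f (c t), s⟫ t := by
    intro t
    have h1 : HasFDerivAt f (InnerProductSpace.toDual ℝ _ (gradient f (c t))) (c t) :=
      (hdiff (c t)).hasGradientAt.hasFDerivAt
    have := h1.comp_hasDerivAt t (hc t)
    simpa [InnerProductSpace.toDual_apply_apply, Function.comp_def] using this
  have hq : ∀ t : ℝ, HasDerivAt (fun t => ⟪gradient f (c t), s⟫) ⟪(Hess (c t)) s, s⟫ t := by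
    intro t
    have h1 : HasDerivAt (fun t => gradient f (c t)) ((Hess (c t)) s) t :=
      (hHess (c t)).comp_hasDerivAt t (hc t)
    have h2 := h1.inner ℝ (hasDerivAt_const t s)
    simpa using h2
  have hc0 : c 0 = x := by simp [hc_def]
  -- bound on second derivative
  have hrb : ∀ t ∈ Set.Icc (0:ℝ) 1, ⟪(Hess (c t)) s, s⟫ ≤ ⟪(Hess x) s, s⟫ + LH * ‖s‖^3 * t := by
    intro t ht
    have h1 : ⟪(Hess (c t)) s - (Hess x) s, s⟫ ≤ ‖(Hess (c t)) s - (Hess x) s‖ * ‖s‖ :=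
      real_inner_le_norm _ _
    have h2 : ‖(Hess (c t)) s - (Hess x) s‖ ≤ ‖Hess (c t) - Hess x‖ * ‖s‖ := by
      have h := (Hess (c t) - Hess x).le_opNorm s
      rwa [ContinuousLinearMap.sub_apply] at h
    have h3 : ‖Hess (c t) - Hess x‖ ≤ LH * (t * ‖s‖) := by
      have h := hLip (c t) x
      have he : ‖c t - x‖ = t * ‖s‖ := by
        have h5 : c t - x = t • s := by simp [hc_def]
        rw [h5, norm_smul, Real.norm_eq_abs, abs_of_nonneg ht.1]
      rwa [he] at h
    have h4 : ⟪(Hess (c t)) s - (Hess x) s, s⟫ ≤ LH * (t * ‖s‖) * ‖s‖ * ‖s‖ := by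
      calc ⟪(Hess (c t)) s - (Hess x) s, s⟫ ≤ ‖(Hess (c t)) s - (Hess x) s‖ * ‖s‖ := h1
        _ ≤ (‖Hess (c t) - Hess x‖ * ‖s‖) * ‖s‖ := by
            apply mul_le_mul_of_nonneg_right h2 (norm_nonneg _)
        _ ≤ (LH * (t * ‖s‖) * ‖s‖) * ‖s‖ := by
            apply mul_le_mul_of_nonneg_right (mul_le_mul_of_nonneg_right h3 (norm_nonneg _))
              (norm_nonneg _)
    rw [inner_sub_left] at h4
    nlinarith [h4]
  set a : ℝ := ⟪gradient f x, s⟫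
  set b : ℝ := ⟪(Hess x) s, s⟫
  set L3 : ℝ := LH * ‖s‖^3
  set ψ' : ℝ → ℝ := fun t => a + b * t + L3 * t^2 / 2 - ⟪gradient f (c t), s⟫ with hψ'_def
  set ψ : ℝ → ℝ := fun t => f x + a * t + b * t^2 / 2 + L3 * t^3 / 6 - f (c t) with hψ_def
  have hψd : ∀ t : ℝ, HasDerivAt ψ (ψ' t) t := by
    intro t
    have h1 := (((hasDerivAt_const t (f x)).add ((hasDerivAt_id t).const_mul a)).add
      (((hasDerivAt_pow 2 t).const_mul b).div_const 2)).add
      (((hasDerivAt_pow 3 t).const_mul L3).div_const 6)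
    convert h1.sub (hφ t) using 1
    · rfl
    · rfl
    · rfl
    push_cast; ring
  have hψ'd : ∀ t : ℝ, HasDerivAt ψ' (b + L3 * t - ⟪(Hess (c t)) s, s⟫) t := by
    intro t
    have h1 := ((hasDerivAt_const t a).add ((hasDerivAt_id t).const_mul b)).add
      (((hasDerivAt_pow 2 t).const_mul L3).div_const 2)
    convert h1.sub (hq t) using 1
    · rfl
    · rfl
    · rfl
    push_cast; ring
  -- ψ' is monotone on [0,1]
  have hψ'mono : MonotoneOn ψ' (Set.Icc 0 1) := by
    apply monotoneOn_of_deriv_nonneg (convex_Icc 0 1)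
    · exact fun t _ => (hψ'd t).continuousAt.continuousWithinAt
    · exact fun t _ => ((hψ'd t).differentiableAt).differentiableWithinAt
    · intro t ht
      rw [interior_Icc] at ht
      rw [(hψ'd t).deriv]
      have := hrb t ⟨le_of_lt ht.1, le_of_lt ht.2⟩
      simp only [L3] at *
      linarith
  have hψ'0 : ψ' 0 = 0 := by simp [hψ'_def, hc0, a]
  have hψ'nonneg : ∀ t ∈ Set.Icc (0:ℝ) 1, 0 ≤ ψ' t := by
    intro t ht
    have := hψ'mono (Set.left_mem_Icc.2 zero_le_one) ht ht.1
    rw [hψ'0] at this; exact this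
  have hψmono : MonotoneOn ψ (Set.Icc 0 1) := by
    apply monotoneOn_of_deriv_nonneg (convex_Icc 0 1)
    · exact fun t _ => (hψd t).continuousAt.continuousWithinAt
    · exact fun t _ => ((hψd t).differentiableAt).differentiableWithinAt
    · intro t ht
      rw [interior_Icc] at ht
      rw [(hψd t).deriv]
      exact hψ'nonneg t ⟨le_of_lt ht.1, le_of_lt ht.2⟩
  have h01 := hψmono (Set.left_mem_Icc.2 zero_le_one) (Set.right_mem_Icc.2 zero_le_one)
    zero_le_one
  have hψ0 : ψ 0 = 0 := by simp [hψ_def, hc0]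
  have hψ1 : ψ 1 = f x + a + b / 2 + L3 / 6 - f (x + s) := by
    simp [hψ_def, hc_def]
  rw [hψ0, hψ1] at h01
  have hbcomm : ⟪s, (Hess x) s⟫ = b := real_inner_comm _ _
  rw [← hbcomm] at h01
  simp only [L3] at h01
  linarith


theorem lamMin_le_rayleigh {n : ℕ} (T : EuclideanSpace ℝ (Fin n) →L[ℝ] EuclideanSpace ℝ (Fin n))
    (s : EuclideanSpace ℝ (Fin n)) (hs : s ≠ 0) :
    lamMin (fun v => T v) * ‖s‖^2 ≤ ⟪s, T s⟫ := by
  have hsn : (0:ℝ) < ‖s‖ := norm_pos_iff.2 hs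
  set v : EuclideanSpace ℝ (Fin n) := ‖s‖⁻¹ • s with hv_def
  have hvn : ‖v‖ = 1 := norm_smul_inv_norm hs
  have hmem : ⟪v, T v⟫ ∈ {r : ℝ | ∃ w : EuclideanSpace ℝ (Fin n), ‖w‖ = 1 ∧ ⟪w, T w⟫ = r} :=
    ⟨v, hvn, rfl⟩
  have hbdd : BddBelow {r : ℝ | ∃ w : EuclideanSpace ℝ (Fin n), ‖w‖ = 1 ∧ ⟪w, T w⟫ = r} := by
    refine ⟨-‖T‖, ?_⟩
    rintro r ⟨w, hw, rfl⟩
    have h1 : |⟪w, T w⟫| ≤ ‖w‖ * ‖T w‖ := abs_real_inner_le_norm _ _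
    have h2 : ‖T w‖ ≤ ‖T‖ * ‖w‖ := T.le_opNorm w
    rw [hw, one_mul] at h1
    rw [hw, mul_one] at h2
    have := (abs_le.1 h1).1
    linarith
  have hle : lamMin (fun v => T v) ≤ ⟪v, T v⟫ := csInf_le hbdd hmem
  have hray : ⟪v, T v⟫ = ⟪s, T s⟫ / ‖s‖^2 := by
    rw [hv_def, map_smul, real_inner_smul_left, real_inner_smul_right]
    generalize ⟪s, T s⟫ = c
    rw [pow_two]
    field_simp
  rw [hray] at hle
  rw [div_eq_mul_inv] at hle
  have := mul_le_mul_of_nonneg_right hle (le_of_lt (by positivity : (0:ℝ) < ‖s‖^2))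
  calc lamMin (fun v => T v) * ‖s‖^2 ≤ ⟪s, T s⟫ * (‖s‖^2)⁻¹ * ‖s‖^2 := this
    _ = ⟪s, T s⟫ := by field_simp

/-- Lemma 3.1 of the paper, regularized Newton step case: if the regularization
parameter is large enough, the iteration is very successful. -/
theorem very_successful_neig_step {n : ℕ}
    (f : EuclideanSpace ℝ (Fin n) → ℝ)
    (Hess : EuclideanSpace ℝ (Fin n) → EuclideanSpace ℝ (Fin n) →L[ℝ] EuclideanSpace ℝ (Fin n))
    (LH : ℝ) (hLH : 0 < LH)
    (hf : ContDiff ℝ 2 f)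
    (hHess : ∀ y, HasFDerivAt (gradient f) (Hess y) y)
    (hLip : ∀ y z, ‖Hess y - Hess z‖ ≤ LH * ‖y - z‖)
    (x s : EuclideanSpace ℝ (Fin n))
    (hg : gradient f x ≠ 0)
    (σ ς₃ κθ η₂ : ℝ) (hσ : 0 < σ) (hς₃0 : 0 ≤ ς₃) (hς₃1 : ς₃ < 1) (hκθ : 0 < κθ)
    (hη₂0 : 0 < η₂) (hη₂1 : η₂ < 1)
    (μ : ℝ) (hμ : μ = max (-(lamMin fun v => Hess x v)) 0)
    (hres : ‖Hess x s + (Real.sqrt (σ * ‖gradient f x‖) + μ) • s + gradient f x‖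
      ≤ min (ς₃ * Real.sqrt (σ * ‖gradient f x‖) * ‖s‖) (κθ * ‖gradient f x‖))
    (hσbig : LH * (1 + κθ) / (6 * (1 - ς₃) * (1 - η₂)) ≤ σ) :
    f x - f (x + s) ≥ η₂ * (-⟪gradient f x, s⟫ - (1 / 2) * ⟪s, Hess x s⟫) := by
  set g := gradient f x with hg_def
  set H := Hess x with hH_def
  set lam := Real.sqrt (σ * ‖g‖) with hlam_def
  have hgn : (0:ℝ) < ‖g‖ := norm_pos_iff.2 hg
  have hlam : (0:ℝ) < lam := Real.sqrt_pos.2 (by positivity)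
  have hlamsq : lam^2 = σ * ‖g‖ := Real.sq_sqrt (by positivity)
  have hμ0 : 0 ≤ μ := hμ ▸ le_max_right _ _
  -- s ≠ 0
  have hs0 : s ≠ 0 := by
    intro h
    rw [h] at hres
    simp at hres
    exact hg hres.1
  have hsn : (0:ℝ) < ‖s‖ := norm_pos_iff.2 hs0
  -- Rayleigh bound
  have hray : -μ * ‖s‖^2 ≤ ⟪s, H s⟫ := by
    have h1 := lamMin_le_rayleigh H s hs0
    have h2 : -(lamMin fun v => H v) ≤ μ := hμ ▸ le_max_left _ _
    nlinarith [sq_nonneg ‖s‖]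
  set r := H s + (lam + μ) • s + g with hr_def
  have hr1 : ‖r‖ ≤ ς₃ * lam * ‖s‖ := le_trans hres (min_le_left _ _)
  have hr2 : ‖r‖ ≤ κθ * ‖g‖ := le_trans hres (min_le_right _ _)
  have hinner : ⟪r, s⟫ = ⟪H s, s⟫ + (lam + μ) * ‖s‖^2 + ⟪g, s⟫ := by
    rw [hr_def, inner_add_left, inner_add_left, real_inner_smul_left,
      real_inner_self_eq_norm_sq]
  have hcomm : ⟪H s, s⟫ = ⟪s, H s⟫ := real_inner_comm _ _
  have hrs_le : ⟪r, s⟫ ≤ ‖r‖ * ‖s‖ := real_inner_le_norm _ _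
  have hrs_ge : -(‖r‖ * ‖s‖) ≤ ⟪r, s⟫ := (abs_le.1 (abs_real_inner_le_norm r s)).1
  have htay := taylor_cubic f Hess LH (le_of_lt hLH) hf hHess hLip x s
  rw [← hg_def, ← hH_def] at htay
  set Δm : ℝ := -⟪g, s⟫ - (1/2) * ⟪s, H s⟫ with hΔ_def
  set ag : ℝ := ⟪g, s⟫ with hag_def
  set bH : ℝ := ⟪s, H s⟫ with hbH_def
  set cr : ℝ := ⟪r, s⟫ with hcr_def
  set dHs : ℝ := ⟪H s, s⟫ with hdHs_def
  set ng : ℝ := ‖g‖ with hng_def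
  set ns : ℝ := ‖s‖ with hns_def
  set nr : ℝ := ‖r‖ with hnr_def
  set fd : ℝ := f x - f (x + s) with hfd_def
  clear_value Δm ag bH cr dHs ng ns nr fd
  clear_value g H lam r
  clear hres hr_def hμ hg hHess hLip hg_def hH_def hlam_def hs0
  -- lower bound on Δm
  have hss : ns * ns = ns^2 := (pow_two _).symm
  have hμs : 0 ≤ μ * ns^2 := mul_nonneg hμ0 (sq_nonneg _)
  have hΔ1 : (1 - ς₃) * lam * ns^2 ≤ Δm := by
    have h1 : cr ≤ ς₃ * lam * ns^2 := by
      nlinarith [hrs_le, mul_le_mul_of_nonneg_right hr1 (le_of_lt hsn)]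
    linarith [hray, h1, hμs, hinner, hcomm, hΔ_def]
  have hΔpos : 0 < Δm :=
    lt_of_lt_of_le (mul_pos (mul_pos (by linarith : (0:ℝ) < 1 - ς₃) hlam)
      (by positivity : (0:ℝ) < ns^2)) hΔ1
  -- bound on ns
  have hsb : lam * ns ≤ (1 + κθ) * ng := by
    have h2 : cr ≤ κθ * ng * ns := by
      nlinarith [hrs_le, mul_le_mul_of_nonneg_right hr2 (le_of_lt hsn)]
    have h3 : -ag ≤ ng * ns := by
      have h := (abs_le.1 (abs_real_inner_le_norm g s)).1
      rw [← hag_def, ← hng_def, ← hns_def] at h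
      linarith
    have h4 : lam * ns^2 ≤ (1 + κθ) * ng * ns := by nlinarith [hray, h2, h3]
    have h5 : (lam * ns) * ns ≤ ((1 + κθ) * ng) * ns := by nlinarith [h4]
    exact (mul_le_mul_iff_left₀ hsn).1 h5
  -- key cube bound
  have hσ' : LH * (1 + κθ) ≤ 6 * (1 - ς₃) * (1 - η₂) * σ := by
    have hD : (0:ℝ) < 6 * (1 - ς₃) * (1 - η₂) := by nlinarith
    have := (div_le_iff₀ hD).1 hσbig
    nlinarith [this]
  have hkey : LH / 6 * ns^3 ≤ (1 - η₂) * Δm := by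
    have hLHs : LH * ns ≤ 6 * (1 - ς₃) * (1 - η₂) * lam := by
      have h1 : lam * (LH * ns) ≤ LH * ((1 + κθ) * ng) := by
        nlinarith [mul_le_mul_of_nonneg_left hsb (le_of_lt hLH)]
      have h2 : LH * ((1 + κθ) * ng) ≤ 6 * (1 - ς₃) * (1 - η₂) * (σ * ng) := by
        nlinarith [mul_le_mul_of_nonneg_right hσ' (le_of_lt hgn)]
      have h3 : lam * (LH * ns) ≤ lam * (6 * (1 - ς₃) * (1 - η₂) * lam) := by
        have he : lam * (6 * (1 - ς₃) * (1 - η₂) * lam) = 6 * (1 - ς₃) * (1 - η₂) * (σ * ng) := by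
          rw [show lam * (6 * (1 - ς₃) * (1 - η₂) * lam) = 6 * (1 - ς₃) * (1 - η₂) * lam^2 by ring,
            hlamsq]
        rw [he]; linarith
      exact (mul_le_mul_iff_right₀ hlam).1 h3
    have h4 : (1 - η₂) * ((1 - ς₃) * lam * ns^2) ≤ (1 - η₂) * Δm :=
      mul_le_mul_of_nonneg_left hΔ1 (by linarith)
    linarith [h4, mul_le_mul_of_nonneg_right hLHs (by positivity : (0:ℝ) ≤ ns^2)]
  -- Taylor bound
  have hfin : fd ≥ Δm - LH / 6 * ns^3 := by
    rw [hfd_def]; linarith [htay]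
  calc fd ≥ Δm - LH / 6 * ns^3 := hfin
    _ ≥ η₂ * Δm := by linarith
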